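/- arXiv:math/0401072 — 4 statements merged into one kernel-verified Lean document; each statement's English description precedes it below -/
import Mathlib

section
/- For the nearest-neighbour simple random walk on Z^n, the probability of returning to the origin after 2i steps is at most a_i / (2n)^i, where a_i = 2^{2i} i^{2i} e depends only on i. More precisely, the number of 2i-step walks from 0 to 0 is at most n^i i^{2i} 2^{2i} sum_{l=1}^{i} 1/l!. -/
/-- The step of the nearest-neighbour random walk on `ℤ^n` indexed by a coordinate
direction and a sign: `±e_j`. -/
def zStep (n : ℕ) (s : Fin n × Bool) : Fin n → ℤ :=
  fun k => if k = s.1 then (if s.2 then 1 else -1) else 0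

open Finset in

lemma zWalk_image_card_le (n i : ℕ) (w : Fin (2*i) → Fin n × Bool)
    (hw : ∑ t, zStep n (w t) = 0) :
    (Finset.image (fun t => (w t).1) Finset.univ).card ≤ i := by
  set S := Finset.image (fun t => (w t).1) Finset.univ with hS
  have hfib : ∀ j ∈ S, 2 ≤ (univ.filter (fun t => (w t).1 = j)).card := by
    intro j hj
    have hj0 : ∑ t, zStep n (w t) j = 0 := by
      have := congrFun hw j
      simpa [Finset.sum_apply] using this
    have hj1 : ∑ t ∈ univ.filter (fun t => (w t).1 = j),
        (if (w t).2 then (1:ℤ) else -1) = 0 := by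
      calc ∑ t ∈ univ.filter (fun t => (w t).1 = j), (if (w t).2 then (1:ℤ) else -1)
          = ∑ t, if (w t).1 = j then (if (w t).2 then (1:ℤ) else -1) else 0 :=
            Finset.sum_filter _ _
        _ = ∑ t, zStep n (w t) j := by
            refine Finset.sum_congr rfl fun t _ => ?_
            simp only [zStep]
            by_cases h : (w t).1 = j
            · simp [h]
            · simp [h, Ne.symm h]
        _ = 0 := hj0
    set F := univ.filter (fun t => (w t).1 = j) with hF
    set A := F.filter (fun t => (w t).2 = true) with hA
    set B := F.filter (fun t => ¬ ((w t).2 = true)) with hB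
    have hsplit : ∑ t ∈ A, (if (w t).2 then (1:ℤ) else -1)
        + ∑ t ∈ B, (if (w t).2 then (1:ℤ) else -1) = 0 := by
      rw [Finset.sum_filter_add_sum_filter_not]; exact hj1
    have hAsum : ∑ t ∈ A, (if (w t).2 then (1:ℤ) else -1) = A.card := by
      have h1 : ∀ t ∈ A, (if (w t).2 then (1:ℤ) else -1) = 1 := by
        intro t ht
        simp only [hA, mem_filter] at ht
        simp [ht.2]
      rw [Finset.sum_congr rfl h1, Finset.sum_const, nsmul_eq_mul, mul_one]
    have hBsum : ∑ t ∈ B, (if (w t).2 then (1:ℤ) else -1) = -B.card := by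
      have h1 : ∀ t ∈ B, (if (w t).2 then (1:ℤ) else -1) = -1 := by
        intro t ht
        simp only [hB, mem_filter] at ht
        simp [ht.2]
      rw [Finset.sum_congr rfl h1, Finset.sum_const, nsmul_eq_mul, mul_neg_one]
    have hcards : (A.card : ℤ) = B.card := by
      rw [hAsum, hBsum] at hsplit; linarith
    have hABnat : A.card = B.card := by exact_mod_cast hcards
    have hFcard : F.card = A.card + B.card :=
      (Finset.card_filter_add_card_filter_not _).symm
    have hFne : F.Nonempty := by
      rw [hS, Finset.mem_image] at hj
      obtain ⟨t, _, ht⟩ := hj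
      exact ⟨t, by simp [hF, ht]⟩
    have h1 : 1 ≤ F.card := Finset.card_pos.mpr hFne
    omega
  have hsum : ∑ j ∈ S, (univ.filter (fun t => (w t).1 = j)).card
      = (univ : Finset (Fin (2*i))).card :=
    (Finset.card_eq_sum_card_fiberwise
      (fun t _ => Finset.mem_image_of_mem _ (mem_univ t))).symm
  have h2 : S.card * 2 ≤ ∑ j ∈ S, (univ.filter (fun t => (w t).1 = j)).card := by
    calc S.card * 2 = ∑ _j ∈ S, 2 := by rw [Finset.sum_const, smul_eq_mul]
    _ ≤ _ := Finset.sum_le_sum hfib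
  rw [hsum, Finset.card_univ, Fintype.card_fin] at h2
  omega

open Finset in
lemma zWalk_count_bound (n i : ℕ) (hn : 1 ≤ n) (hi : 1 ≤ i) :
    (Finset.univ.filter
        (fun w : Fin (2*i) → Fin n × Bool => ∑ t, zStep n (w t) = 0)).card
      ≤ (∑ l ∈ Finset.Icc 1 i, Nat.choose n l) * (2*i)^(2*i) := by
  classical
  have hpos : 0 < 2 * i := by omega
  haveI : NeZero (2*i) := ⟨by omega⟩
  set T := Finset.univ.filter
      (fun w : Fin (2*i) → Fin n × Bool => ∑ t, zStep n (w t) = 0) with hT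
  set B := (Finset.univ : Finset (Fin n)).powerset.filter
      (fun S => S.Nonempty ∧ S.card ≤ i) with hB
  have hmap : ∀ w ∈ T, Finset.image (fun t => (w t).1) Finset.univ ∈ B := by
    intro w hwT
    rw [hT, mem_filter] at hwT
    rw [hB, mem_filter]
    refine ⟨Finset.mem_powerset.mpr (Finset.subset_univ _), ?_, ?_⟩
    · exact (Finset.univ_nonempty (α := Fin (2*i))).image _
    · exact zWalk_image_card_le n i w hwT.2
  have hcardT : T.card = ∑ S ∈ B,
      (T.filter (fun w => Finset.image (fun t => (w t).1) Finset.univ = S)).card :=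
    Finset.card_eq_sum_card_fiberwise hmap
  have hfiber : ∀ S ∈ B,
      (T.filter (fun w => Finset.image (fun t => (w t).1) Finset.univ = S)).card
        ≤ (2*i)^(2*i) := by
    intro S hS
    rw [hB, mem_filter] at hS
    obtain ⟨-, hSne, hSle⟩ := hS
    have hsub : T.filter (fun w => Finset.image (fun t => (w t).1) Finset.univ = S)
        ⊆ Fintype.piFinset (fun _ : Fin (2*i) => S ×ˢ (Finset.univ : Finset Bool)) := by
      intro w hw
      rw [mem_filter] at hw
      rw [Fintype.mem_piFinset]
      intro t
      rw [Finset.mem_product]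
      refine ⟨?_, Finset.mem_univ _⟩
      rw [← hw.2]
      exact Finset.mem_image_of_mem _ (Finset.mem_univ t)
    calc _ ≤ (Fintype.piFinset (fun _ : Fin (2*i) => S ×ˢ (Finset.univ : Finset Bool))).card :=
          Finset.card_le_card hsub
      _ = (S.card * 2)^(2*i) := by
          simp [Fintype.card_piFinset, Finset.card_product]
      _ ≤ (2*i)^(2*i) := by
          apply Nat.pow_le_pow_left
          calc S.card * 2 ≤ i * 2 := Nat.mul_le_mul_right 2 hSle
            _ = 2 * i := Nat.mul_comm i 2
  have hBcard : B.card ≤ ∑ l ∈ Finset.Icc 1 i, Nat.choose n l := by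
    have hmap2 : ∀ S ∈ B, S.card ∈ Finset.Icc 1 i := by
      intro S hS
      rw [hB, mem_filter] at hS
      rw [Finset.mem_Icc]
      exact ⟨Finset.card_pos.mpr hS.2.1, hS.2.2⟩
    rw [Finset.card_eq_sum_card_fiberwise hmap2]
    refine Finset.sum_le_sum fun l _ => ?_
    have : B.filter (fun S => S.card = l) ⊆ Finset.powersetCard l Finset.univ := by
      intro S hS
      rw [mem_filter] at hS
      exact Finset.mem_powersetCard.mpr ⟨Finset.subset_univ _, hS.2⟩
    calc _ ≤ (Finset.powersetCard l (Finset.univ : Finset (Fin n))).card :=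
          Finset.card_le_card this
      _ = Nat.choose n l := by rw [Finset.card_powersetCard, Finset.card_univ, Fintype.card_fin]
  calc T.card = _ := hcardT
    _ ≤ ∑ _S ∈ B, (2*i)^(2*i) := Finset.sum_le_sum hfiber
    _ = B.card * (2*i)^(2*i) := by rw [Finset.sum_const, smul_eq_mul]
    _ ≤ _ := Nat.mul_le_mul_right _ hBcard

/-- The number of `2i`-step nearest-neighbour walks on `ℤ^n` from `0` to `0` is at most
`n^i i^{2i} 2^{2i} ∑_{l=1}^{i} 1/l!`, and consequently the probability that the simple
random walk on `ℤ^n` returns to the origin after `2i` steps is at most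
`a_i / (2n)^i` with `a_i = 2^{2i} i^{2i} e`. -/
theorem return_probability_Zn (n i : ℕ) (hn : 1 ≤ n) (hi : 1 ≤ i) :
    ((Nat.card {w : Fin (2 * i) → Fin n × Bool // ∑ t, zStep n (w t) = 0} : ℝ) ≤
      (n : ℝ) ^ i * (i : ℝ) ^ (2 * i) * 2 ^ (2 * i) *
        ∑ l ∈ Finset.Icc 1 i, ((l.factorial : ℝ))⁻¹) ∧
    (Nat.card {w : Fin (2 * i) → Fin n × Bool // ∑ t, zStep n (w t) = 0} : ℝ) /
        (2 * (n : ℝ)) ^ (2 * i) ≤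
      (2 : ℝ) ^ (2 * i) * (i : ℝ) ^ (2 * i) * Real.exp 1 / (2 * (n : ℝ)) ^ i := by
  classical
  have hcardeq : Nat.card {w : Fin (2 * i) → Fin n × Bool // ∑ t, zStep n (w t) = 0}
      = (Finset.univ.filter
          (fun w : Fin (2*i) → Fin n × Bool => ∑ t, zStep n (w t) = 0)).card := by
    rw [Nat.card_eq_fintype_card, Fintype.card_subtype]
  set P : ℝ := (Nat.card {w : Fin (2 * i) → Fin n × Bool // ∑ t, zStep n (w t) = 0} : ℝ)
    with hP
  have hc : P ≤ ((∑ l ∈ Finset.Icc 1 i, Nat.choose n l : ℕ) : ℝ) * ((2*i : ℕ) : ℝ)^(2*i) := by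
    rw [hP, hcardeq]
    have := zWalk_count_bound n i hn hi
    calc ((Finset.univ.filter
          (fun w : Fin (2*i) → Fin n × Bool => ∑ t, zStep n (w t) = 0)).card : ℝ)
        ≤ (((∑ l ∈ Finset.Icc 1 i, Nat.choose n l) * (2*i)^(2*i) : ℕ) : ℝ) :=
          Nat.cast_le.mpr this
      _ = _ := by push_cast; ring
  have hchoose : ∀ l ∈ Finset.Icc 1 i, ((Nat.choose n l : ℕ) : ℝ)
      ≤ (n:ℝ)^i * ((l.factorial : ℝ))⁻¹ := by
    intro l hl
    rw [Finset.mem_Icc] at hl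
    have h1 : (Nat.choose n l) * l.factorial ≤ n ^ l := by
      rw [mul_comm, ← Nat.descFactorial_eq_factorial_mul_choose]
      exact Nat.descFactorial_le_pow n l
    have h1' : ((Nat.choose n l : ℕ) : ℝ) * (l.factorial : ℝ) ≤ (n:ℝ)^l := by
      exact_mod_cast h1
    have hfpos : (0:ℝ) < (l.factorial : ℝ) := by
      exact_mod_cast l.factorial_pos
    have h2 : ((Nat.choose n l : ℕ) : ℝ) ≤ (n:ℝ)^l * ((l.factorial : ℝ))⁻¹ := by
      rw [← div_eq_mul_inv, le_div_iff₀ hfpos]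
      exact h1'
    refine h2.trans ?_
    have : (n:ℝ)^l ≤ (n:ℝ)^i :=
      pow_le_pow_right₀ (by exact_mod_cast hn) hl.2
    exact mul_le_mul_of_nonneg_right this (by positivity)
  have hsum : ((∑ l ∈ Finset.Icc 1 i, Nat.choose n l : ℕ) : ℝ)
      ≤ (n:ℝ)^i * ∑ l ∈ Finset.Icc 1 i, ((l.factorial : ℝ))⁻¹ := by
    push_cast
    rw [Finset.mul_sum]
    exact Finset.sum_le_sum hchoose
  have hpow : (((2*i : ℕ)) : ℝ)^(2*i) = 2^(2*i) * (i:ℝ)^(2*i) := by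
    push_cast
    rw [mul_pow]
  have part1 : P ≤ (n : ℝ) ^ i * (i : ℝ) ^ (2 * i) * 2 ^ (2 * i) *
      ∑ l ∈ Finset.Icc 1 i, ((l.factorial : ℝ))⁻¹ := by
    refine hc.trans ?_
    calc ((∑ l ∈ Finset.Icc 1 i, Nat.choose n l : ℕ) : ℝ) * ((2*i : ℕ) : ℝ)^(2*i)
        ≤ ((n:ℝ)^i * ∑ l ∈ Finset.Icc 1 i, ((l.factorial : ℝ))⁻¹) * ((2*i : ℕ) : ℝ)^(2*i) :=
          mul_le_mul_of_nonneg_right hsum (by positivity)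
      _ = _ := by rw [hpow]; ring
  refine ⟨part1, ?_⟩
  -- Part 2
  set x : ℝ := (2 * (n:ℝ))^i with hx
  have hnpos : (0:ℝ) < n := by exact_mod_cast hn
  have hxpos : (0:ℝ) < x := by positivity
  have hSle : ∑ l ∈ Finset.Icc 1 i, ((l.factorial : ℝ))⁻¹ ≤ (i:ℝ) := by
    calc ∑ l ∈ Finset.Icc 1 i, ((l.factorial : ℝ))⁻¹
        ≤ ∑ l ∈ Finset.Icc 1 i, (1:ℝ) := by
          refine Finset.sum_le_sum fun l _ => ?_
          rw [inv_le_one_iff₀]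
          right
          exact_mod_cast Nat.one_le_iff_ne_zero.mpr l.factorial_ne_zero
      _ = (i:ℝ) := by
          rw [Finset.sum_const, Nat.card_Icc]
          simp
  have hie : (i:ℝ) ≤ Real.exp 1 * 2^i := by
    have h1 : (i:ℝ) ≤ 2^i := by
      exact_mod_cast (Nat.lt_two_pow_self (n := i)).le
    have h2 : (1:ℝ) ≤ Real.exp 1 := Real.one_le_exp zero_le_one
    calc (i:ℝ) ≤ 2^i := h1
      _ = 1 * 2^i := (one_mul _).symm
      _ ≤ Real.exp 1 * 2^i := by
          exact mul_le_mul_of_nonneg_right h2 (by positivity)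
  have hPC : P ≤ ((2:ℝ)^(2*i) * (i:ℝ)^(2*i) * Real.exp 1) * x := by
    refine part1.trans ?_
    have hS : ∑ l ∈ Finset.Icc 1 i, ((l.factorial : ℝ))⁻¹ ≤ Real.exp 1 * 2^i :=
      hSle.trans hie
    calc (n : ℝ) ^ i * (i : ℝ) ^ (2 * i) * 2 ^ (2 * i) *
        ∑ l ∈ Finset.Icc 1 i, ((l.factorial : ℝ))⁻¹
        ≤ (n : ℝ) ^ i * (i : ℝ) ^ (2 * i) * 2 ^ (2 * i) * (Real.exp 1 * 2^i) :=
          mul_le_mul_of_nonneg_left hS (by positivity)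
      _ = ((2:ℝ)^(2*i) * (i:ℝ)^(2*i) * Real.exp 1) * x := by
          rw [hx, mul_pow]; ring
  have hx2 : (2 * (n:ℝ))^(2*i) = x^2 := by
    rw [hx, ← pow_mul, mul_comm i 2]
  rw [hx2]
  calc P / x^2 ≤ (((2:ℝ)^(2*i) * (i:ℝ)^(2*i) * Real.exp 1) * x) / x^2 :=
        div_le_div_of_nonneg_right hPC (by positivity) |>.trans_eq rfl
    _ = ((2:ℝ)^(2*i) * (i:ℝ)^(2*i) * Real.exp 1) / x := by
        rw [pow_two, ← div_div, mul_div_cancel_right₀ _ hxpos.ne']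
end

section
/- Fix ε ∈ (0, 1/2) and an integer j ≥ 1. Then the sum 2^{-n} Σ_{k ∈ {0,π}^n, k ≠ 0} (n / (2 m(k)))^{j}, where m(k) is the number of components of k equal to π, is bounded uniformly in n ≥ 1 by a constant depending only on j and ε. -/
/-- Fix `ε ∈ (0,1/2)` and an integer `j ≥ 1`.  The sum
`2^{-n} ∑_{k ∈ {0,π}^n, k ≠ 0} (n / (2 m(k)))^j`, where `k` is encoded as a function
`Fin n → Bool` (with `true = π`) and `m(k)` is the number of components equal to `π`,
is bounded uniformly in `n ≥ 1` by a constant depending only on `j` and `ε`. -/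
theorem sum_inverse_Dhat_bounded (ε : ℝ) (hε0 : 0 < ε) (hε : ε < 1 / 2)
    (j : ℕ) (hj : 1 ≤ j) :
    ∃ C : ℝ, ∀ n : ℕ, 1 ≤ n →
      ((2 : ℝ) ^ n)⁻¹ *
        ∑ k ∈ Finset.univ.filter (fun k : Fin n → Bool => k ≠ fun _ => false),
          ((n : ℝ) /
            (2 * ((Finset.univ.filter (fun j' => k j' = true)).card : ℝ))) ^ j ≤ C := by
  classical
  set r : ℝ := (3 : ℝ) ^ ((4 : ℝ)⁻¹) with hr_def
  have h3 : (0 : ℝ) < 3 := by norm_num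
  have hr0 : 0 < r := Real.rpow_pos_of_pos h3 _
  have hr4 : r ^ (4 : ℕ) = 3 := by
    rw [hr_def, ← Real.rpow_natCast ((3 : ℝ) ^ ((4 : ℝ)⁻¹)) 4, ← Real.rpow_mul h3.le]
    norm_num
  have hr1 : 1 ≤ r := Real.one_le_rpow (by norm_num) (by norm_num)
  set q : ℝ := 2 * r / 3 with hq_def
  have hq0 : 0 ≤ q := by positivity
  have hq1 : q < 1 := by nlinarith [hr0, hr4, sq_nonneg (r - 1), sq_nonneg (r + 1)]
  have htd : Filter.Tendsto (fun n : ℕ => (1 / 2 : ℝ) ^ j * ((n : ℝ) ^ j * q ^ n))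
      Filter.atTop (nhds ((1 / 2 : ℝ) ^ j * 0)) :=
    (tendsto_pow_const_mul_const_pow_of_lt_one j hq0 hq1).const_mul _
  obtain ⟨C0, hC0⟩ := htd.bddAbove_range
  refine ⟨(2 : ℝ) ^ j + C0, fun n hn => ?_⟩
  set w : (Fin n → Bool) → ℕ :=
    fun k => (Finset.univ.filter (fun j' => k j' = true)).card with hw
  set A : Finset (Fin n → Bool) :=
    Finset.univ.filter (fun k : Fin n → Bool => k ≠ fun _ => false) with hA
  have hwn : ∀ k : Fin n → Bool, w k ≤ n := by
    intro k
    calc w k ≤ (Finset.univ : Finset (Fin n)).card := Finset.card_filter_le _ _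
    _ = n := by simp
  -- rewrite the sum fiberwise
  have key : ∑ k ∈ A, ((n : ℝ) / (2 * (w k : ℝ))) ^ j
      = ∑ m ∈ Finset.range (n + 1),
          (((A.filter (fun k => w k = m)).card : ℝ) * ((n : ℝ) / (2 * (m : ℝ))) ^ j) := by
    have hfib := Finset.sum_fiberwise_eq_sum_filter' A (Finset.range (n + 1)) w
      (fun m => ((n : ℝ) / (2 * (m : ℝ))) ^ j)
    simp only [Finset.sum_const, nsmul_eq_mul] at hfib
    rw [Finset.filter_true_of_mem (fun k _ => by simp [Nat.lt_succ_iff, hwn k])] at hfib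
    exact hfib.symm
  -- fiber cardinality bound
  have fibcard : ∀ m : ℕ, ((A.filter (fun k => w k = m)).card : ℝ) ≤ (n.choose m : ℝ) := by
    intro m
    have hcard : (A.filter (fun k => w k = m)).card ≤ n.choose m := by
      have : (A.filter (fun k => w k = m)).card
          ≤ (Finset.powersetCard m (Finset.univ : Finset (Fin n))).card := by
        apply Finset.card_le_card_of_injOn
          (fun k => Finset.univ.filter (fun j' => k j' = true))
        · intro k hk
          rw [Finset.mem_coe, Finset.mem_filter] at hk
          rw [Finset.mem_coe, Finset.mem_powersetCard]
          exact ⟨Finset.filter_subset _ _ |>.trans (Finset.subset_univ _) , hk.2⟩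
        · intro k1 h1 k2 h2 hkk
          funext i
          have hkk' : Finset.univ.filter (fun j' => k1 j' = true)
              = Finset.univ.filter (fun j' => k2 j' = true) := hkk
          have : (i ∈ Finset.univ.filter (fun j' => k1 j' = true))
              ↔ (i ∈ Finset.univ.filter (fun j' => k2 j' = true)) := by rw [hkk']
          simp only [Finset.mem_filter, Finset.mem_univ, true_and] at this
          cases hk1 : k1 i <;> cases hk2 : k2 i <;> simp_all
      simpa [Finset.card_powersetCard] using this
    exact_mod_cast hcard
  -- per-m bound
  have per : ∀ m ∈ Finset.range (n + 1),
      (((A.filter (fun k => w k = m)).card : ℝ) * ((n : ℝ) / (2 * (m : ℝ))) ^ j)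
        ≤ (n.choose m : ℝ) * ((1 / 3 : ℝ) ^ m * r ^ n * ((n : ℝ) / 2) ^ j)
          + (n.choose m : ℝ) * (2 : ℝ) ^ j := by
    intro m _
    have hcnn : (0 : ℝ) ≤ ((A.filter (fun k => w k = m)).card : ℝ) := by positivity
    rcases Nat.eq_zero_or_pos m with hm0 | hm1
    · subst hm0
      have : ((n : ℝ) / (2 * ((0 : ℕ) : ℝ))) ^ j = 0 := by
        simp [zero_pow (by omega : j ≠ 0)]
      rw [this, mul_zero]
      positivity
    · have hmR : (1 : ℝ) ≤ (m : ℝ) := by exact_mod_cast hm1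
      have hgnn : (0 : ℝ) ≤ (n : ℝ) / (2 * (m : ℝ)) := by positivity
      rcases le_or_gt (4 * m) n with hcase | hcase
      · -- small m : use the geometric weight
        have hg : ((n : ℝ) / (2 * (m : ℝ))) ^ j ≤ ((n : ℝ) / 2) ^ j := by
          apply pow_le_pow_left₀ hgnn
          apply div_le_div_of_nonneg_left (by positivity) (by norm_num)
          nlinarith
        have hweight : (1 : ℝ) ≤ (1 / 3 : ℝ) ^ m * r ^ n := by
          have h1 : (3 : ℝ) ^ m ≤ r ^ n := by
            calc (3 : ℝ) ^ m = (r ^ (4 : ℕ)) ^ m := by rw [hr4]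
            _ = r ^ (4 * m) := by rw [← pow_mul]
            _ ≤ r ^ n := pow_le_pow_right₀ hr1 hcase
          have h3m : (0 : ℝ) < (3 : ℝ) ^ m := by positivity
          rw [one_div, inv_pow, inv_mul_eq_div, le_div_iff₀ h3m, one_mul]
          exact h1
        have step1 : (((A.filter (fun k => w k = m)).card : ℝ) * ((n : ℝ) / (2 * (m : ℝ))) ^ j)
            ≤ (n.choose m : ℝ) * ((1 / 3 : ℝ) ^ m * r ^ n * ((n : ℝ) / 2) ^ j) := by
          calc ((A.filter (fun k => w k = m)).card : ℝ) * ((n : ℝ) / (2 * (m : ℝ))) ^ j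
              ≤ (n.choose m : ℝ) * ((n : ℝ) / 2) ^ j := by
                apply mul_le_mul (fibcard m) hg (by positivity) (by positivity)
          _ ≤ (n.choose m : ℝ) * ((1 / 3 : ℝ) ^ m * r ^ n * ((n : ℝ) / 2) ^ j) :=
                mul_le_mul_of_nonneg_left
                  (le_mul_of_one_le_left (by positivity) hweight) (by positivity)
        exact step1.trans (le_add_of_nonneg_right (by positivity))
      · -- large m : the term itself is at most 2^j
        have hg : ((n : ℝ) / (2 * (m : ℝ))) ^ j ≤ (2 : ℝ) ^ j := by
          apply pow_le_pow_left₀ hgnn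
          rw [div_le_iff₀ (by positivity)]
          have : (n : ℝ) ≤ 4 * (m : ℝ) := by exact_mod_cast hcase.le
          linarith
        have : (((A.filter (fun k => w k = m)).card : ℝ) * ((n : ℝ) / (2 * (m : ℝ))) ^ j)
            ≤ (n.choose m : ℝ) * (2 : ℝ) ^ j :=
          mul_le_mul (fibcard m) hg (by positivity) (by positivity)
        exact this.trans (le_add_of_nonneg_left (by positivity))
  -- sum the bounds
  have sum1 : ∑ m ∈ Finset.range (n + 1), (n.choose m : ℝ) * (1 / 3 : ℝ) ^ m
      = (4 / 3 : ℝ) ^ n := by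
    have := add_pow (1 / 3 : ℝ) 1 n
    simp only [one_pow, mul_one] at this
    rw [show (4 / 3 : ℝ) = 1 / 3 + 1 by norm_num, this]
    apply Finset.sum_congr rfl
    intro m _
    ring
  have sum2 : ∑ m ∈ Finset.range (n + 1), (n.choose m : ℝ) = (2 : ℝ) ^ n := by
    exact_mod_cast congrArg (Nat.cast : ℕ → ℝ) (Nat.sum_range_choose n)
  have total : ∑ k ∈ A, ((n : ℝ) / (2 * (w k : ℝ))) ^ j
      ≤ r ^ n * ((n : ℝ) / 2) ^ j * (4 / 3 : ℝ) ^ n + (2 : ℝ) ^ j * (2 : ℝ) ^ n := by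
    rw [key]
    calc _ ≤ ∑ m ∈ Finset.range (n + 1),
          ((n.choose m : ℝ) * ((1 / 3 : ℝ) ^ m * r ^ n * ((n : ℝ) / 2) ^ j)
            + (n.choose m : ℝ) * (2 : ℝ) ^ j) := Finset.sum_le_sum per
    _ = r ^ n * ((n : ℝ) / 2) ^ j * (∑ m ∈ Finset.range (n + 1), (n.choose m : ℝ) * (1 / 3 : ℝ) ^ m)
        + (2 : ℝ) ^ j * (∑ m ∈ Finset.range (n + 1), (n.choose m : ℝ)) := by
          rw [Finset.sum_add_distrib, Finset.mul_sum, Finset.mul_sum]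
          congr 1 <;> apply Finset.sum_congr rfl <;> intro m _ <;> ring
    _ = _ := by rw [sum1, sum2]
  -- conclude
  have h2n : (0 : ℝ) < (2 : ℝ) ^ n := by positivity
  have hfin : ((2 : ℝ) ^ n)⁻¹ * ∑ k ∈ A, ((n : ℝ) / (2 * (w k : ℝ))) ^ j
      ≤ (1 / 2 : ℝ) ^ j * ((n : ℝ) ^ j * q ^ n) + (2 : ℝ) ^ j := by
    have hqn : r ^ n * (4 / 3 : ℝ) ^ n * ((2 : ℝ) ^ n)⁻¹ = q ^ n := by
      rw [hq_def, ← mul_pow, ← inv_pow, ← mul_pow]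
      congr 1
      ring
    calc ((2 : ℝ) ^ n)⁻¹ * ∑ k ∈ A, ((n : ℝ) / (2 * (w k : ℝ))) ^ j
        ≤ ((2 : ℝ) ^ n)⁻¹ * (r ^ n * ((n : ℝ) / 2) ^ j * (4 / 3 : ℝ) ^ n
            + (2 : ℝ) ^ j * (2 : ℝ) ^ n) := by
          apply mul_le_mul_of_nonneg_left total (by positivity)
    _ = ((n : ℝ) / 2) ^ j * (r ^ n * (4 / 3 : ℝ) ^ n * ((2 : ℝ) ^ n)⁻¹) + (2 : ℝ) ^ j := by
          field_simp
    _ = (1 / 2 : ℝ) ^ j * ((n : ℝ) ^ j * q ^ n) + (2 : ℝ) ^ j := by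
          rw [hqn, div_pow, one_div, inv_pow]
          ring
  have hC0' : (1 / 2 : ℝ) ^ j * ((n : ℝ) ^ j * q ^ n) ≤ C0 :=
    hC0 (Set.mem_range_self n)
  calc ((2 : ℝ) ^ n)⁻¹ * ∑ k ∈ A, ((n : ℝ) / (2 * (w k : ℝ))) ^ j
      ≤ (1 / 2 : ℝ) ^ j * ((n : ℝ) ^ j * q ^ n) + (2 : ℝ) ^ j := hfin
  _ ≤ (2 : ℝ) ^ j + C0 := by linarith
end

section
/- In bond percolation on a transitive graph of degree Ω, for every i ≥ 1 the restricted two-point function τ_p^{(i)}(x) = P_p(0 is connected to x by an occupied path of length at least i) satisfies τ_p^{(i)}(x) ≤ (pΩ)^i (D^{*i} * τ_p)(x), where D^{*i} is the i-fold convolution of the single-step distribution D. -/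
open MeasureTheory ProbabilityTheory ENNReal

/-- `e` is an edge of the transitive (Cayley) graph on the additive group `V`
with neighbour set `S`. -/
def IsEdge {V : Type*} [AddCommGroup V] (S : Finset V) (e : Sym2 V) : Prop :=
  ∃ x y : V, e = s(x, y) ∧ y - x ∈ S

/-- The event that `x` is connected to `y` by an occupied self-avoiding path of
length at least `i`. -/
def ConnGE {V : Type*} [AddCommGroup V] {Ωs : Type*} (S : Finset V)
    (occ : Sym2 V → Set Ωs) (i : ℕ) (x y : V) : Set Ωs :=
  {ω | ∃ k, i ≤ k ∧ ∃ w : Fin (k + 1) → V, Function.Injective w ∧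
    w 0 = x ∧ w (Fin.last k) = y ∧
    ∀ m : Fin k, w m.succ - w m.castSucc ∈ S ∧ ω ∈ occ s(w m.castSucc, w m.succ)}

/-- The event that `x` is connected to `y` by an occupied path. -/
def Conn {V : Type*} [AddCommGroup V] {Ωs : Type*} (S : Finset V)
    (occ : Sym2 V → Set Ωs) : V → V → Set Ωs :=
  ConnGE S occ 0

section Aux

variable {V : Type*} [AddCommGroup V]

/-- Walk from `a` with increments `g`. -/
def incWalk (a : V) {k : ℕ} (g : Fin k → V) : Fin (k + 1) → V :=
  fun m => a + ∑ j ∈ Finset.univ.filter (fun j : Fin k => (j : ℕ) < (m : ℕ)), g j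

lemma incWalk_zero (a : V) {k : ℕ} (g : Fin k → V) : incWalk a g 0 = a := by
  simp [incWalk]

lemma incWalk_last (a : V) {k : ℕ} (g : Fin k → V) :
    incWalk a g (Fin.last k) = a + ∑ j, g j := by
  unfold incWalk
  congr 1
  refine Finset.sum_congr ?_ (fun _ _ => rfl)
  ext j
  simp [j.isLt]

lemma incWalk_succ (a : V) {k : ℕ} (g : Fin k → V) (m : Fin k) :
    incWalk a g m.succ = incWalk a g m.castSucc + g m := by
  unfold incWalk
  rw [add_assoc]
  congr 1
  have h : Finset.univ.filter (fun j : Fin k => (j : ℕ) < ((m.succ : Fin (k+1)) : ℕ)) =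
      insert m (Finset.univ.filter (fun j : Fin k => (j : ℕ) < ((m.castSucc : Fin (k+1)) : ℕ))) := by
    ext j
    simp only [Finset.mem_filter, Finset.mem_univ, true_and, Finset.mem_insert,
      Fin.val_succ, Fin.coe_castSucc]
    constructor
    · intro hj
      rcases Nat.lt_succ_iff_lt_or_eq.mp hj with h | h
      · exact Or.inr h
      · exact Or.inl (Fin.ext h)
    · rintro (rfl | hj)
      · omega
      · omega
  rw [h, Finset.sum_insert (by simp)]
  rw [add_comm]

lemma incWalk_step (a : V) {k : ℕ} (g : Fin k → V) (m : Fin k) :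
    incWalk a g m.succ - incWalk a g m.castSucc = g m := by
  rw [incWalk_succ]; abel

/-- If `g` lists the increments of a segment of `w`, then `incWalk` recovers the segment. -/
lemma incWalk_eq_sub {k r t : ℕ} (h : t + r ≤ k) (w : Fin (k + 1) → V)
    (g : Fin r → V)
    (hg : ∀ (m : ℕ) (hm : m < r), g ⟨m, hm⟩ = w ⟨t + m + 1, by omega⟩ - w ⟨t + m, by omega⟩) :
    ∀ n (hn : n ≤ r), incWalk (w ⟨t, by omega⟩) g ⟨n, by omega⟩ = w ⟨t + n, by omega⟩ := by
  intro n
  induction n with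
  | zero => intro _; simpa using incWalk_zero (w ⟨t, by omega⟩) g
  | succ n ih =>
    intro hn
    have hn' : n < r := hn
    have h2 : incWalk (w ⟨t, by omega⟩) g ⟨n + 1, by omega⟩ =
        incWalk (w ⟨t, by omega⟩) g ⟨n, by omega⟩ + g ⟨n, hn'⟩ :=
      incWalk_succ (w ⟨t, by omega⟩) g ⟨n, hn'⟩
    rw [h2, ih (by omega), hg n hn']
    abel

variable {Ωs : Type*}

/-- The event that every step of the walk `w` is occupied. -/
def StepOcc (occ : Sym2 V → Set Ωs) {k : ℕ} (w : Fin (k + 1) → V) : Set Ωs :=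
  ⋂ m : Fin k, occ s(w m.castSucc, w m.succ)

/-- The event that `0` is connected to `b` by an occupied self-avoiding walk with
steps in `S` avoiding the edge set `E`. -/
def CEvt (S : Finset V) (occ : Sym2 V → Set Ωs) (E : Set (Sym2 V)) (b : V) : Set Ωs :=
  ⋃ (k : ℕ) (g : Fin k → ↥S)
    (_ : Function.Injective (incWalk (0 : V) (fun j => (g j : V))) ∧
      incWalk (0 : V) (fun j => (g j : V)) (Fin.last k) = b ∧
      ∀ m : Fin k, s(incWalk (0 : V) (fun j => (g j : V)) m.castSucc,
        incWalk (0 : V) (fun j => (g j : V)) m.succ) ∉ E),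
    StepOcc occ (incWalk (0 : V) (fun j => (g j : V)))

lemma isEdge_of_step {S : Finset V} {a b : V} (h : b - a ∈ S) : IsEdge S s(a, b) :=
  ⟨a, b, rfl, h⟩

lemma edge_inj {k : ℕ} {w : Fin (k + 1) → V} (hw : Function.Injective w) :
    Function.Injective (fun m : Fin k => s(w m.castSucc, w m.succ)) := by
  intro a b hab
  simp only [Sym2.eq_iff] at hab
  rcases hab with ⟨h1, h2⟩ | ⟨h1, h2⟩
  · exact Fin.castSucc_injective k (hw h1)
  · have e1 := Fin.val_eq_of_eq (hw h1)
    have e2 := Fin.val_eq_of_eq (hw h2)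
    simp only [Fin.coe_castSucc, Fin.val_succ] at e1 e2
    apply Fin.ext; omega


lemma cEvt_subset_conn (S : Finset V) (occ : Sym2 V → Set Ωs) (E : Set (Sym2 V)) (b : V) :
    CEvt S occ E b ⊆ Conn S occ 0 b := by
  rintro ω hω
  simp only [CEvt, Set.mem_iUnion] at hω
  obtain ⟨k, g, ⟨hinj, hlast, -⟩, hocc⟩ := hω
  exact ⟨k, Nat.zero_le k, incWalk 0 (fun j => (g j : V)), hinj, incWalk_zero _ _, hlast,
    fun m => ⟨by rw [incWalk_step]; exact (g m).2, Set.mem_iInter.mp hocc m⟩⟩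

lemma cEvt_measurable [MeasurableSpace Ωs] (S : Finset V) (occ : Sym2 V → Set Ωs)
    (E : Set (Sym2 V)) (b : V) :
    MeasurableSet[MeasurableSpace.generateFrom
      {t | ∃ n ∈ {e : {e : Sym2 V // IsEdge S e} | (e : Sym2 V) ∉ E},
        occ (n : Sym2 V) = t}] (CEvt S occ E b) := by
  apply MeasurableSet.iUnion; intro k
  apply MeasurableSet.iUnion; intro g
  apply MeasurableSet.iUnion; intro hcond
  apply MeasurableSet.iInter; intro m
  exact MeasurableSpace.measurableSet_generateFrom
    ⟨⟨_, isEdge_of_step (by rw [incWalk_step]; exact (g m).2)⟩, hcond.2.2 m, rfl⟩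

lemma stepOcc_measurable [MeasurableSpace Ωs] (S : Finset V) (occ : Sym2 V → Set Ωs)
    {i : ℕ} (w : Fin (i + 1) → V) (hstep : ∀ m : Fin i, w m.succ - w m.castSucc ∈ S) :
    MeasurableSet[MeasurableSpace.generateFrom
      {t | ∃ n ∈ {e : {e : Sym2 V // IsEdge S e} |
          (e : Sym2 V) ∈ Set.range (fun m : Fin i => s(w m.castSucc, w m.succ))},
        occ (n : Sym2 V) = t}] (StepOcc occ w) :=
  MeasurableSet.iInter fun m => MeasurableSpace.measurableSet_generateFrom
    ⟨⟨_, isEdge_of_step (hstep m)⟩, ⟨m, rfl⟩, rfl⟩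

lemma stepOcc_measure [MeasurableSpace Ωs] (S : Finset V) (P : Measure Ωs)
    (occ : Sym2 V → Set Ωs) (p : ℝ≥0∞) (hoccP : ∀ e, IsEdge S e → P (occ e) = p)
    (hind : iIndepSet (fun e : {e : Sym2 V // IsEdge S e} => occ (e : Sym2 V)) P)
    {i : ℕ} (w : Fin (i + 1) → V) (hw : Function.Injective w)
    (hstep : ∀ m : Fin i, w m.succ - w m.castSucc ∈ S) :
    P (StepOcc occ w) = p ^ i := by
  classical
  set ee : Fin i → {e : Sym2 V // IsEdge S e} :=
    fun m => ⟨s(w m.castSucc, w m.succ), isEdge_of_step (hstep m)⟩ with hee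
  have hinj : Function.Injective ee := fun a b hab => edge_inj hw (congrArg Subtype.val hab)
  have h1 : StepOcc occ w = ⋂ n ∈ Finset.image ee Finset.univ, occ (n : Sym2 V) := by
    ext ω
    simp only [StepOcc, Set.mem_iInter, Finset.mem_image, Finset.mem_univ, true_and]
    constructor
    · rintro h n ⟨m, rfl⟩; exact h m
    · intro h m; exact h (ee m) ⟨m, rfl⟩
  rw [h1, hind.meas_biInter]
  calc (∏ n ∈ Finset.image ee Finset.univ, P (occ (n : Sym2 V)))
      = ∏ _n ∈ Finset.image ee Finset.univ, p :=
        Finset.prod_congr rfl fun n _ => hoccP _ n.2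
    _ = p ^ i := by
        rw [Finset.prod_const, Finset.card_image_of_injective _ hinj, Finset.card_univ,
          Fintype.card_fin]

lemma connGE_subset (S : Finset V) (occ : Sym2 V → Set Ωs) {i : ℕ} (hi : 1 ≤ i) (x : V) :
    ConnGE S occ i 0 x ⊆ ⋃ (f : Fin i → ↥S)
      (_ : Function.Injective (incWalk (x - ∑ m, (f m : V)) (fun m => (f m : V)))),
      (CEvt S occ (Set.range (fun m : Fin i =>
          s(incWalk (x - ∑ m, (f m : V)) (fun m => (f m : V)) m.castSucc,
            incWalk (x - ∑ m, (f m : V)) (fun m => (f m : V)) m.succ)))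
          (x - ∑ m, (f m : V)) ∩
        StepOcc occ (incWalk (x - ∑ m, (f m : V)) (fun m => (f m : V)))) := by
  rintro ω ⟨k, hik, w, hw, h0, hl, hstep⟩
  -- the last i increments
  set f : Fin i → ↥S := fun m =>
    ⟨w ⟨k - i + (m : ℕ) + 1, by omega⟩ - w ⟨k - i + (m : ℕ), by omega⟩,
      (hstep ⟨k - i + (m : ℕ), by omega⟩).1⟩ with hf
  have hA := incWalk_eq_sub (k := k) (r := i) (t := k - i) (by omega) w
    (fun m => (f m : V)) (fun m hm => rfl)
  -- base point of the tail walk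
  have hbase : w ⟨k - i, by omega⟩ = x - ∑ m, (f m : V) := by
    have h1 := hA i le_rfl
    have e1 : (⟨k - i + i, by omega⟩ : Fin (k + 1)) = Fin.last k := Fin.ext (by simp; omega)
    have e2 : (⟨i, by omega⟩ : Fin (i + 1)) = Fin.last i := rfl
    rw [e1, hl, e2, incWalk_last] at h1
    rw [← h1]; abel
  have htw : ∀ m : Fin (i + 1),
      incWalk (x - ∑ m, (f m : V)) (fun m => (f m : V)) m = w ⟨k - i + (m : ℕ), by omega⟩ := by
    intro m
    rw [← hbase]
    exact hA m.1 (Nat.lt_succ_iff.mp m.isLt)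
  -- first k - i increments
  set g : Fin (k - i) → ↥S := fun m =>
    ⟨w ⟨(m : ℕ) + 1, by omega⟩ - w ⟨(m : ℕ), by omega⟩,
      (hstep ⟨(m : ℕ), by omega⟩).1⟩ with hg
  have hB := incWalk_eq_sub (k := k) (r := k - i) (t := 0) (by omega) w
    (fun m => (g m : V)) (fun m hm => by
      have e1 : (⟨0 + m + 1, by omega⟩ : Fin (k + 1)) = ⟨m + 1, by omega⟩ := Fin.ext (by simp)
      have e2 : (⟨0 + m, by omega⟩ : Fin (k + 1)) = ⟨m, by omega⟩ := Fin.ext (by simp)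
      rw [e1, e2])
  have htw0 : ∀ m : Fin (k - i + 1),
      incWalk (0 : V) (fun j => (g j : V)) m = w ⟨(m : ℕ), by omega⟩ := by
    intro m
    have h1 := hB m.1 (Nat.lt_succ_iff.mp m.isLt)
    have e0 : w ⟨0, by omega⟩ = 0 := by rw [← h0]; exact congrArg w (Fin.ext (by simp))
    have e1 : (⟨0 + (m : ℕ), by omega⟩ : Fin (k + 1)) = ⟨(m : ℕ), by omega⟩ :=
      Fin.ext (by simp)
    rw [e0, e1] at h1
    exact h1
  refine Set.mem_iUnion.2 ⟨f, Set.mem_iUnion.2 ⟨?_, ?_, ?_⟩⟩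
  · -- injectivity of the tail walk
    intro a b hab
    rw [htw a, htw b] at hab
    have := Fin.val_eq_of_eq (hw hab)
    simp only at this
    exact Fin.ext (by omega)
  · -- the C event
    simp only [CEvt, Set.mem_iUnion]
    refine ⟨k - i, g, ⟨?_, ?_, ?_⟩, ?_⟩
    · intro a b hab
      rw [htw0 a, htw0 b] at hab
      have := Fin.val_eq_of_eq (hw hab)
      simp only at this
      exact Fin.ext (by omega)
    · rw [htw0 (Fin.last (k - i))]
      rw [← hbase]
      rfl
    · intro m' hm'
      obtain ⟨m, hm⟩ := hm'
      simp only [Sym2.eq_iff] at hm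
      rw [htw m.castSucc, htw m.succ, htw0 m'.castSucc, htw0 m'.succ] at hm
      have hmi : (m : ℕ) < i := m.isLt
      have hmk : (m' : ℕ) < k - i := m'.isLt
      rcases hm with ⟨h1, h2⟩ | ⟨h1, h2⟩
      · have e1 := Fin.val_eq_of_eq (hw h1)
        simp only [Fin.coe_castSucc, Fin.val_succ] at e1
        omega
      · have e1 := Fin.val_eq_of_eq (hw h1)
        have e2 := Fin.val_eq_of_eq (hw h2)
        simp only [Fin.coe_castSucc, Fin.val_succ] at e1 e2
        omega
    · refine Set.mem_iInter.2 fun m' => ?_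
      rw [htw0 m'.castSucc, htw0 m'.succ]
      exact (hstep ⟨(m' : ℕ), by omega⟩).2
  · -- the tail step event
    refine Set.mem_iInter.2 fun m => ?_
    rw [htw m.castSucc, htw m.succ]
    exact (hstep ⟨k - i + (m : ℕ), by omega⟩).2

end Aux

/-- In bond percolation on a transitive graph of degree `Ω = S.card`, for every `i ≥ 1`
the restricted two-point function `τ_p^{(i)}(x)` (connection by an occupied path of
length at least `i`) satisfies `τ_p^{(i)}(x) ≤ (pΩ)^i (D^{*i} * τ_p)(x)`, where
`(D^{*i} * τ_p)(x) = Ω^{-i} ∑_{s_1,…,s_i ∈ S} τ_p(x - s_1 - ⋯ - s_i)`. -/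
theorem two_point_ge_le_step_conv {V Ωs : Type*} [AddCommGroup V] [MeasurableSpace Ωs]
    (S : Finset V) (h0S : (0 : V) ∉ S) (hSymm : ∀ v ∈ S, -v ∈ S)
    (P : Measure Ωs) [IsProbabilityMeasure P]
    (occ : Sym2 V → Set Ωs) (hmeas : ∀ e, MeasurableSet (occ e))
    (p : ℝ≥0∞) (hp : p ≤ 1) (hoccP : ∀ e, IsEdge S e → P (occ e) = p)
    (hind : iIndepSet (fun e : {e : Sym2 V // IsEdge S e} => occ (e : Sym2 V)) P)
    (i : ℕ) (hi : 1 ≤ i) (x : V) :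
    P (ConnGE S occ i 0 x) ≤
      (p * S.card) ^ i * (((S.card : ℝ≥0∞) ^ i)⁻¹ *
        ∑ f : Fin i → ↥S, P (Conn S occ 0 (x - ∑ m, (f m : V)))) := by
  classical
  set tw : (Fin i → ↥S) → Fin (i + 1) → V :=
    fun f => incWalk (x - ∑ m, (f m : V)) (fun m => (f m : V)) with htw
  set E : (Fin i → ↥S) → Set (Sym2 V) :=
    fun f => Set.range (fun m : Fin i => s(tw f m.castSucc, tw f m.succ)) with hE
  set Cf : (Fin i → ↥S) → Set Ωs := fun f => CEvt S occ (E f) (x - ∑ m, (f m : V)) with hCf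
  set Of : (Fin i → ↥S) → Set Ωs := fun f => StepOcc occ (tw f) with hOf
  have key : ∀ f : Fin i → ↥S,
      P (⋃ (_ : Function.Injective (tw f)), (Cf f ∩ Of f)) ≤
        p ^ i * P (Conn S occ 0 (x - ∑ m, (f m : V))) := by
    intro f
    by_cases hg : Function.Injective (tw f)
    · have h1 : P (⋃ (_ : Function.Injective (tw f)), (Cf f ∩ Of f)) ≤ P (Cf f ∩ Of f) :=
        measure_mono (Set.iUnion_subset fun _ => subset_rfl)
      refine h1.trans ?_
      have hstepS : ∀ m : Fin i, tw f m.succ - tw f m.castSucc ∈ S := by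
        intro m; rw [htw]; rw [incWalk_step]; exact (f m).2
      have hdisj : Disjoint {e : {e : Sym2 V // IsEdge S e} | (e : Sym2 V) ∈ E f}
          {e : {e : Sym2 V // IsEdge S e} | (e : Sym2 V) ∉ E f} := by
        rw [Set.disjoint_left]; intro n hn hn'; exact hn' hn
      have hindep := hind.indep_generateFrom_of_disjoint (fun n => hmeas _) _ _ hdisj
      rw [Indep_iff] at hindep
      have hmul := hindep (Of f) (Cf f) (stepOcc_measurable S occ (tw f) hstepS)
        (cEvt_measurable S occ (E f) (x - ∑ m, (f m : V)))
      rw [Set.inter_comm] at hmul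
      rw [hmul, stepOcc_measure S P occ p hoccP hind (tw f) hg hstepS]
      exact mul_le_mul_right (measure_mono (cEvt_subset_conn S occ _ _)) _
    · have h1 : (⋃ (_ : Function.Injective (tw f)), (Cf f ∩ Of f)) ⊆ ∅ :=
        Set.iUnion_subset fun h => absurd h hg
      calc P (⋃ (_ : Function.Injective (tw f)), (Cf f ∩ Of f)) ≤ P ∅ := measure_mono h1
        _ = 0 := measure_empty
        _ ≤ _ := zero_le
  have main : P (ConnGE S occ i 0 x) ≤
      p ^ i * ∑ f : Fin i → ↥S, P (Conn S occ 0 (x - ∑ m, (f m : V))) := by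
    calc P (ConnGE S occ i 0 x)
        ≤ P (⋃ (f : Fin i → ↥S) (_ : Function.Injective (tw f)), (Cf f ∩ Of f)) :=
          measure_mono (connGE_subset S occ hi x)
      _ ≤ ∑ f : Fin i → ↥S, P (⋃ (_ : Function.Injective (tw f)), (Cf f ∩ Of f)) :=
          measure_iUnion_fintype_le _ _
      _ ≤ ∑ f : Fin i → ↥S, p ^ i * P (Conn S occ 0 (x - ∑ m, (f m : V))) :=
          Finset.sum_le_sum fun f _ => key f
      _ = _ := by rw [← Finset.mul_sum]
  refine main.trans ?_
  rcases eq_or_ne ((S.card : ℝ≥0∞)) 0 with hc | hc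
  · have hS : S = ∅ := by simpa using hc
    haveI : IsEmpty ↥S := by rw [hS]; exact Finset.isEmpty_coe_sort.2 rfl
    haveI : IsEmpty (Fin i → ↥S) := ⟨fun f => IsEmpty.false (f ⟨0, hi⟩)⟩
    rw [Finset.univ_eq_empty, Finset.sum_empty, mul_zero]
    exact zero_le
  · have htop : ((S.card : ℝ≥0∞)) ^ i ≠ ⊤ := ENNReal.pow_ne_top (ENNReal.natCast_ne_top _)
    have hne : ((S.card : ℝ≥0∞)) ^ i ≠ 0 := pow_ne_zero _ hc
    apply le_of_eq
    rw [mul_pow, mul_assoc, ← mul_assoc ((S.card : ℝ≥0∞) ^ i),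
      ENNReal.mul_inv_cancel hne htop, one_mul]
end

section
/- Assume Ω p_c ≤ 2 and the diagrammatic bound T_p^{(i,j)} ≤ K_{i,j} Ω^{-i/2}. Then the triangle-type quantity T_p = sup_x (pΩ)(D * τ_p^{*3})(x) satisfies T_p ≤ (2 + 12 K_{2,3}) Ω^{-1}, via the decomposition pΩ(D * τ_p^{*3})(x) ≤ pΩ D(x) + 3 (pΩ)² (D^{*2} * τ_p^{*3})(x). -/
open MeasureTheory ProbabilityTheory ENNReal

/-- Convolution over the vertex group. -/
noncomputable def pconv {V : Type*} [AddCommGroup V] (f g : V → ℝ≥0∞) (x : V) : ℝ≥0∞ :=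
  ∑' y, f y * g (x - y)

/-- The single-step distribution `D(y) = 1/Ω` for `y` a neighbour of `0`. -/
noncomputable def DStep {V : Type*} [AddCommGroup V] [DecidableEq V] (S : Finset V)
    (y : V) : ℝ≥0∞ :=
  if y ∈ S then (S.card : ℝ≥0∞)⁻¹ else 0



section Conv
variable {V : Type*} [AddCommGroup V]

noncomputable def pdelta (V : Type*) [AddCommGroup V] [DecidableEq V] : V → ℝ≥0∞ :=
  fun u => if u = 0 then 1 else 0

lemma pconv_mono {f f' g g' : V → ℝ≥0∞} (hf : f ≤ f') (hg : g ≤ g') :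
    pconv f g ≤ pconv f' g' := fun x =>
  ENNReal.tsum_le_tsum fun y => mul_le_mul' (hf y) (hg _)

variable [DecidableEq V]

lemma pconv_delta_right (f : V → ℝ≥0∞) : pconv f (pdelta V) = f := by
  funext x
  unfold pconv pdelta
  rw [tsum_eq_single x]
  · simp
  · intro y hy
    rw [if_neg (by rw [sub_eq_zero]; exact fun h => hy h.symm), mul_zero]

lemma pconv_delta_left (f : V → ℝ≥0∞) : pconv (pdelta V) f = f := by
  funext x
  unfold pconv pdelta
  rw [tsum_eq_single 0]
  · simp
  · intro y hy
    rw [if_neg hy, zero_mul]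

lemma pconv_add_left (f g h : V → ℝ≥0∞) :
    pconv (fun y => f y + g y) h = fun x => pconv f h x + pconv g h x := by
  funext x
  simp only [pconv, add_mul]
  exact ENNReal.tsum_add

lemma pconv_smul_left (c : ℝ≥0∞) (f h : V → ℝ≥0∞) :
    pconv (fun y => c * f y) h = fun x => c * pconv f h x := by
  funext x
  simp only [pconv, mul_assoc]
  exact ENNReal.tsum_mul_left

lemma pconv_add_right (f g h : V → ℝ≥0∞) :
    pconv f (fun y => g y + h y) = fun x => pconv f g x + pconv f h x := by
  funext x
  simp only [pconv, mul_add]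
  exact ENNReal.tsum_add

lemma pconv_smul_right (c : ℝ≥0∞) (f h : V → ℝ≥0∞) :
    pconv f (fun y => c * h y) = fun x => c * pconv f h x := by
  funext x
  simp only [pconv]
  rw [← ENNReal.tsum_mul_left]
  congr 1 with y
  ring

lemma pconv_assoc (f g h : V → ℝ≥0∞) :
    pconv (pconv f g) h = pconv f (pconv g h) := by
  funext x
  unfold pconv
  calc ∑' y, (∑' z, f z * g (y - z)) * h (x - y)
      = ∑' y, ∑' z, f z * g (y - z) * h (x - y) := by
        congr 1 with y; exact ENNReal.tsum_mul_right.symm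
    _ = ∑' z, ∑' y, f z * g (y - z) * h (x - y) := ENNReal.tsum_comm
    _ = ∑' z, f z * ∑' y, g (y - z) * h (x - y) := by
        congr 1 with z
        rw [← ENNReal.tsum_mul_left]
        congr 1 with y; ring
    _ = ∑' z, f z * ∑' w, g w * h (x - z - w) := by
        congr 1 with z
        congr 1
        rw [← (Equiv.addLeft z).tsum_eq fun y => g (y - z) * h (x - y)]
        congr 1 with w
        simp [sub_sub, add_sub_cancel_left]

end Conv





section Path
variable {V : Type*} [AddCommGroup V]

/-- The path with steps `σ` starting at `0`. -/
def pathOf {k : ℕ} (σ : Fin k → V) (m : Fin (k + 1)) : V :=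
  ∑ i ∈ Finset.univ.filter (fun i : Fin k => (i : ℕ) < (m : ℕ)), σ i

lemma pathOf_zero {k : ℕ} (σ : Fin k → V) : pathOf σ 0 = 0 := by
  unfold pathOf
  simp

lemma pathOf_step {k : ℕ} (σ : Fin k → V) (m : Fin k) :
    pathOf σ m.succ = pathOf σ m.castSucc + σ m := by
  unfold pathOf
  have : Finset.univ.filter (fun i : Fin k => (i : ℕ) < (m.succ : ℕ)) =
      insert m (Finset.univ.filter (fun i : Fin k => (i : ℕ) < (m.castSucc : ℕ))) := by
    ext i
    simp only [Finset.mem_filter, Finset.mem_univ, true_and, Finset.mem_insert,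
      Fin.val_succ, Fin.coe_castSucc]
    rw [Nat.lt_succ_iff_lt_or_eq]
    constructor
    · rintro (h | h)
      · exact Or.inr h
      · exact Or.inl (Fin.ext h)
    · rintro (h | h)
      · exact Or.inr (by rw [h])
      · exact Or.inl h
  rw [this, Finset.sum_insert (by simp)]
  exact add_comm _ _

lemma pathOf_eq {k : ℕ} (w : Fin (k + 1) → V) (hw0 : w 0 = 0) (m : Fin (k + 1)) :
    w m = pathOf (fun i => w i.succ - w i.castSucc) m := by
  induction m using Fin.induction with
  | zero => rw [hw0, pathOf_zero]
  | succ i ih =>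
      rw [pathOf_step, ← ih, add_sub_cancel]
end Path

/-- Key "first-step from the end" inequality.  -/
lemma bk_ineq {V Ωs : Type*} [AddCommGroup V] [DecidableEq V] [MeasurableSpace Ωs]
    (S : Finset V) (P : Measure Ωs) [IsProbabilityMeasure P]
    (occ : Sym2 V → Set Ωs) (hmeas : ∀ e, MeasurableSet (occ e))
    (p : ℝ≥0∞) (hoccP : ∀ e, IsEdge S e → P (occ e) = p)
    (hind : iIndepSet (fun e : {e : Sym2 V // IsEdge S e} => occ (e : Sym2 V)) P)
    (u : V) (hu : u ≠ 0) :
    P (Conn S occ 0 u) ≤ p * ∑ s ∈ S, P (Conn S occ 0 (u - s)) := by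
  classical
  -- the event of a path from 0 to u - s avoiding u
  set B : V → Set Ωs := fun s =>
    {ω | ∃ k, ∃ w : Fin (k + 1) → V, Function.Injective w ∧
      w 0 = 0 ∧ w (Fin.last k) = u - s ∧ (∀ m, w m ≠ u) ∧
      ∀ m : Fin k, w m.succ - w m.castSucc ∈ S ∧ ω ∈ occ s(w m.castSucc, w m.succ)} with hB
  -- covering by last step
  have hcov : Conn S occ 0 u ⊆ ⋃ s ∈ S, (occ s(u - s, u) ∩ B s) := by
    rintro ω ⟨k, -, w, hinj, hw0, hwl, hstep⟩
    cases k with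
    | zero =>
        exact absurd (by rw [← hwl, show (Fin.last 0) = 0 from rfl, hw0]) hu
    | succ k' =>
        set M : Fin (k' + 1) := Fin.last k' with hM
        have hMs : M.succ = Fin.last (k' + 1) := Fin.succ_last k'
        obtain ⟨hSstep, hocc⟩ := hstep M
        have hvu : w M.succ = u := by rw [hMs, hwl]
        set v : V := w M.castSucc with hv
        have hsS : u - v ∈ S := by rw [← hvu]; exact hSstep
        refine Set.mem_iUnion₂.mpr ⟨u - v, hsS, ?_, ?_⟩
        · have : u - (u - v) = v := by abel
          rw [this, ← hvu]
          exact hocc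
        · refine ⟨k', fun m => w m.castSucc, hinj.comp (Fin.castSucc_injective _), ?_, ?_, ?_, ?_⟩
          · show w (Fin.castSucc 0) = 0
            rw [Fin.castSucc_zero]; exact hw0
          · show w (Fin.last k').castSucc = u - (u - v)
            rw [← hM]; rw [show u - (u - v) = v by abel]
          · intro m hmu
            have hmu' : w m.castSucc = u := hmu
            have : m.castSucc = Fin.last (k' + 1) := hinj (by rw [hmu', hwl])
            exact absurd this (Fin.ne_of_lt (Fin.castSucc_lt_last m))
          · intro m
            have := hstep m.castSucc
            rwa [Fin.succ_castSucc] at this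
  -- probability of each piece
  have hpiece : ∀ s ∈ S, P (occ s(u - s, u) ∩ B s) ≤ p * P (Conn S occ 0 (u - s)) := by
    intro s hs
    have he₀ : IsEdge S s(u - s, u) := ⟨u - s, u, rfl, by rw [_root_.sub_sub_cancel]; exact hs⟩
    set i₀ : {e : Sym2 V // IsEdge S e} := ⟨s(u - s, u), he₀⟩ with hi₀
    have hindep := hind.indep_generateFrom_of_disjoint
      (fun e : {e : Sym2 V // IsEdge S e} => hmeas (e : Sym2 V))
      ({i₀} : Set {e : Sym2 V // IsEdge S e}) ({i₀}ᶜ : Set {e : Sym2 V // IsEdge S e})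
      disjoint_compl_right
    rw [Indep_iff] at hindep
    -- measurability of B s w.r.t. edges ≠ i₀
    have hBmeas : MeasurableSet[MeasurableSpace.generateFrom
        {t | ∃ n ∈ ({i₀}ᶜ : Set {e : Sym2 V // IsEdge S e}), occ (n : Sym2 V) = t}] (B s) := by
      have hBeq : B s = ⋃ k : ℕ, ⋃ σ : Fin k → ↥S,
          if h : Function.Injective (pathOf fun i => (σ i : V)) ∧
              pathOf (fun i => (σ i : V)) (Fin.last k) = u - s ∧
              (∀ m, pathOf (fun i => (σ i : V)) m ≠ u)
          then ⋂ m : Fin k, occ s(pathOf (fun i => (σ i : V)) m.castSucc,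
              pathOf (fun i => (σ i : V)) m.succ)
          else ∅ := by
        ext ω
        simp only [hB, Set.mem_setOf_eq, Set.mem_iUnion]
        constructor
        · rintro ⟨k, w, hinj, hw0, hwl, havoid, hstep⟩
          refine ⟨k, fun i => ⟨w i.succ - w i.castSucc, (hstep i).1⟩, ?_⟩
          have hpw : ∀ m, pathOf (fun i => w i.succ - w i.castSucc) m = w m :=
            fun m => (pathOf_eq w hw0 m).symm
          rw [dif_pos]
          · exact Set.mem_iInter.mpr fun m => by
              rw [hpw, hpw]; exact (hstep m).2
          · refine ⟨?_, by rw [hpw]; exact hwl, fun m => by rw [hpw]; exact havoid m⟩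
            intro a b hab
            rw [hpw, hpw] at hab
            exact hinj hab
        · rintro ⟨k, σ, hω⟩
          by_cases h : Function.Injective (pathOf fun i => (σ i : V)) ∧
              pathOf (fun i => (σ i : V)) (Fin.last k) = u - s ∧
              (∀ m, pathOf (fun i => (σ i : V)) m ≠ u)
          · rw [dif_pos h] at hω
            exact ⟨k, pathOf fun i => (σ i : V), h.1, pathOf_zero _, h.2.1, h.2.2,
              fun m => ⟨by rw [pathOf_step, add_sub_cancel_left]; exact (σ m).2, Set.mem_iInter.mp hω m⟩⟩
          · rw [dif_neg h] at hω
            exact absurd hω (Set.notMem_empty ω)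
      rw [hBeq]
      refine MeasurableSet.iUnion fun k => MeasurableSet.iUnion fun σ => ?_
      split_ifs with h
      · refine MeasurableSet.iInter fun m => ?_
        refine MeasurableSpace.measurableSet_generateFrom ?_
        have hme : IsEdge S s(pathOf (fun i => (σ i : V)) m.castSucc,
            pathOf (fun i => (σ i : V)) m.succ) :=
          ⟨_, _, rfl, by rw [pathOf_step]; simpa using (σ m).2⟩
        refine ⟨⟨_, hme⟩, ?_, rfl⟩
        simp only [Set.mem_compl_iff, Set.mem_singleton_iff]
        intro hcontra
        have : (s(pathOf (fun i => (σ i : V)) m.castSucc,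
            pathOf (fun i => (σ i : V)) m.succ) : Sym2 V) = s(u - s, u) :=
          congrArg Subtype.val hcontra
        have humem : u ∈ s(pathOf (fun i => (σ i : V)) m.castSucc,
            pathOf (fun i => (σ i : V)) m.succ) := by
          rw [this]; simp
        rcases Sym2.mem_iff.mp humem with h1 | h2
        · exact h.2.2 m.castSucc h1.symm
        · exact h.2.2 m.succ h2.symm
      · exact @MeasurableSet.empty _ (MeasurableSpace.generateFrom _)
    have hocc₀ : MeasurableSet[MeasurableSpace.generateFrom
        {t | ∃ n ∈ ({i₀} : Set {e : Sym2 V // IsEdge S e}), occ (n : Sym2 V) = t}]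
        (occ s(u - s, u)) :=
      MeasurableSpace.measurableSet_generateFrom ⟨i₀, rfl, rfl⟩
    have hprod := hindep _ _ hocc₀ hBmeas
    rw [hprod, hoccP _ he₀]
    refine mul_le_mul_right (measure_mono ?_) p
    rintro ω ⟨k, w, hinj, hw0, hwl, -, hstep⟩
    exact ⟨k, Nat.zero_le _, w, hinj, hw0, hwl, hstep⟩
  calc P (Conn S occ 0 u) ≤ P (⋃ s ∈ S, (occ s(u - s, u) ∩ B s)) := measure_mono hcov
    _ ≤ ∑ s ∈ S, P (occ s(u - s, u) ∩ B s) := measure_biUnion_finset_le _ _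
    _ ≤ ∑ s ∈ S, p * P (Conn S occ 0 (u - s)) := Finset.sum_le_sum hpiece
    _ = p * ∑ s ∈ S, P (Conn S occ 0 (u - s)) := (Finset.mul_sum _ _ _).symm

/-- Assume `Ωp ≤ 2` and the diagrammatic bound `T_p^{(2,3)} ≤ K_{2,3} Ω⁻¹`, where
`T_p^{(2,3)}` bounds `(D^{*2} * τ_p^{*3})(x)` pointwise (this uses `τ̂_p ≥ 0`).  Then
`T_p = sup_x (pΩ)(D * τ_p^{*3})(x) ≤ (2 + 12 K_{2,3}) Ω⁻¹`, via the decomposition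
`pΩ(D * τ_p^{*3})(x) ≤ pΩ D(x) + 3 (pΩ)² (D^{*2} * τ_p^{*3})(x)`. -/
theorem triangle_bound {V Ωs : Type*} [AddCommGroup V] [DecidableEq V]
    [MeasurableSpace Ωs]
    (S : Finset V) (h0S : (0 : V) ∉ S) (hSymm : ∀ v ∈ S, -v ∈ S)
    (P : Measure Ωs) [IsProbabilityMeasure P]
    (occ : Sym2 V → Set Ωs) (hmeas : ∀ e, MeasurableSet (occ e))
    (p : ℝ≥0∞) (hp : p ≤ 1) (hoccP : ∀ e, IsEdge S e → P (occ e) = p)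
    (hind : iIndepSet (fun e : {e : Sym2 V // IsEdge S e} => occ (e : Sym2 V)) P)
    (T23 K23 : ℝ≥0∞)
    (hpΩ : p * S.card ≤ 2)
    (hT23 : ∀ x : V,
      pconv (DStep S) (pconv (DStep S)
        (pconv (fun y => P (Conn S occ 0 y)) (pconv (fun y => P (Conn S occ 0 y))
          (fun y => P (Conn S occ 0 y))))) x ≤ T23)
    (hK : T23 ≤ K23 * (S.card : ℝ≥0∞)⁻¹) :
    (∀ x : V,
      p * S.card * pconv (DStep S)
        (pconv (fun y => P (Conn S occ 0 y)) (pconv (fun y => P (Conn S occ 0 y))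
          (fun y => P (Conn S occ 0 y)))) x ≤
      p * S.card * DStep S x + 3 * (p * S.card) ^ 2 *
        pconv (DStep S) (pconv (DStep S)
          (pconv (fun y => P (Conn S occ 0 y)) (pconv (fun y => P (Conn S occ 0 y))
            (fun y => P (Conn S occ 0 y))))) x) ∧
    (⨆ x : V, p * S.card * pconv (DStep S)
        (pconv (fun y => P (Conn S occ 0 y)) (pconv (fun y => P (Conn S occ 0 y))
          (fun y => P (Conn S occ 0 y)))) x) ≤
      (2 + 12 * K23) * (S.card : ℝ≥0∞)⁻¹ := by
  classical
  set τ : V → ℝ≥0∞ := fun y => P (Conn S occ 0 y) with hτ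
  set D : V → ℝ≥0∞ := DStep S with hD
  set c : ℝ≥0∞ := p * S.card with hc
  -- τ(0) ≥ 1
  have hτ0 : (1 : ℝ≥0∞) ≤ τ 0 := by
    have hsub : (Set.univ : Set Ωs) ⊆ Conn S occ 0 0 := by
      intro ω _
      exact ⟨0, le_rfl, fun _ => 0, fun a b _ => Subsingleton.elim (α := Fin 1) a b, rfl, rfl,
        fun m => m.elim0⟩
    calc (1 : ℝ≥0∞) = P Set.univ := measure_univ.symm
      _ ≤ τ 0 := measure_mono hsub
  have hδτ : pdelta V ≤ τ := by
    intro u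
    unfold pdelta
    split_ifs with h
    · subst h; exact hτ0
    · exact zero_le
  -- BK-type pointwise bound
  have hBK : τ ≤ fun u => pdelta V u + c * pconv D τ u := by
    intro u
    by_cases hu : u = 0
    · subst hu
      refine le_trans prob_le_one ?_
      show (1 : ℝ≥0∞) ≤ pdelta V 0 + c * pconv D τ 0
      rw [show pdelta V 0 = 1 from if_pos rfl]
      exact le_self_add
    · have hbk := bk_ineq S P occ hmeas p hoccP hind u hu
      rcases S.eq_empty_or_nonempty with hS | hS
      · subst hS
        simp only [Finset.sum_empty, mul_zero] at hbk
        exact hbk.trans zero_le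
      · have hcard : (S.card : ℝ≥0∞) ≠ 0 := by
          simp only [ne_eq, Nat.cast_eq_zero]
          exact Finset.card_ne_zero.mpr hS
        have hfin : (S.card : ℝ≥0∞) ≠ ⊤ := natCast_ne_top _
        have hDτ : pconv D τ u = (S.card : ℝ≥0∞)⁻¹ * ∑ s ∈ S, τ (u - s) := by
          unfold pconv
          rw [tsum_eq_sum (s := S) (fun y hy => by
            simp only [hD, DStep, if_neg hy, zero_mul]), Finset.mul_sum]
          refine Finset.sum_congr rfl fun y hy => ?_
          simp only [hD, DStep, if_pos hy]
        show τ u ≤ pdelta V u + c * pconv D τ u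
        unfold pdelta
        rw [if_neg hu, zero_add, hDτ, hc, mul_assoc p, ← mul_assoc (S.card : ℝ≥0∞),
          ENNReal.mul_inv_cancel hcard hfin, one_mul]
        exact hbk
  -- monotonicity chain
  have hm2 : τ ≤ pconv τ τ := by
    have h := pconv_mono (le_refl τ) hδτ
    rwa [pconv_delta_right] at h
  have hm3 : pconv τ τ ≤ pconv τ (pconv τ τ) := pconv_mono (le_refl τ) hm2
  set A : V → ℝ≥0∞ := pconv τ (pconv τ τ) with hA
  have hτA : τ ≤ A := hm2.trans hm3
  -- generic BK expansion
  have hexp : ∀ f : V → ℝ≥0∞, pconv τ f ≤ fun x => f x + c * pconv D (pconv τ f) x := by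
    intro f
    calc pconv τ f ≤ pconv (fun u => pdelta V u + c * pconv D τ u) f :=
          pconv_mono hBK (le_refl f)
      _ = fun x => pconv (pdelta V) f x + pconv (fun u => c * pconv D τ u) f x :=
          pconv_add_left _ _ _
      _ = fun x => f x + c * pconv (pconv D τ) f x := by
          rw [pconv_delta_left, pconv_smul_left]
      _ = fun x => f x + c * pconv D (pconv τ f) x := by rw [pconv_assoc]
  have h3 : A ≤ fun x => pconv τ τ x + c * pconv D A x := hexp (pconv τ τ)
  have h2 : pconv τ τ ≤ fun x => τ x + c * pconv D A x := by
    refine (hexp τ).trans fun x => ?_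
    exact add_le_add_right (mul_le_mul_right
      (pconv_mono (le_refl D) hm3 x) c) (τ x)
  have h1 : τ ≤ fun x => pdelta V x + c * pconv D A x := by
    refine hBK.trans fun x => ?_
    exact add_le_add_right (mul_le_mul_right
      (pconv_mono (le_refl D) hτA x) c) (pdelta V x)
  have hAbound : A ≤ fun x => pdelta V x + 3 * c * pconv D A x := by
    intro x
    calc A x ≤ pconv τ τ x + c * pconv D A x := h3 x
      _ ≤ (τ x + c * pconv D A x) + c * pconv D A x := add_le_add_left (h2 x) _
      _ ≤ ((pdelta V x + c * pconv D A x) + c * pconv D A x) + c * pconv D A x :=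
          add_le_add_left (add_le_add_left (h1 x) _) _
      _ = pdelta V x + 3 * c * pconv D A x := by ring
  have hDA : ∀ x, pconv D A x ≤ D x + 3 * c * pconv D (pconv D A) x := by
    have hcalc : pconv D A ≤ fun x => D x + 3 * c * pconv D (pconv D A) x :=
      calc pconv D A ≤ pconv D (fun x => pdelta V x + 3 * c * pconv D A x) :=
            pconv_mono (le_refl D) hAbound
        _ = fun x => pconv D (pdelta V) x + pconv D (fun u => 3 * c * pconv D A u) x :=
            pconv_add_right _ _ _
        _ = fun x => D x + 3 * c * pconv D (pconv D A) x := by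
            rw [pconv_delta_right, pconv_smul_right]
    exact hcalc
  have hpart1 : ∀ x : V, c * pconv D A x ≤ c * D x + 3 * c ^ 2 * pconv D (pconv D A) x := by
    intro x
    calc c * pconv D A x ≤ c * (D x + 3 * c * pconv D (pconv D A) x) :=
          mul_le_mul_right (hDA x) c
      _ = c * D x + 3 * c ^ 2 * pconv D (pconv D A) x := by ring
  refine ⟨hpart1, ?_⟩
  refine iSup_le fun x => ?_
  have hDle : D x ≤ (S.card : ℝ≥0∞)⁻¹ := by
    simp only [hD, DStep]
    split_ifs
    · exact le_rfl
    · exact zero_le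
  calc c * pconv D A x ≤ c * D x + 3 * c ^ 2 * pconv D (pconv D A) x := hpart1 x
    _ ≤ 2 * (S.card : ℝ≥0∞)⁻¹ + 3 * 2 ^ 2 * (K23 * (S.card : ℝ≥0∞)⁻¹) := by
        refine add_le_add (mul_le_mul' hpΩ hDle) (mul_le_mul' (mul_le_mul' le_rfl
          (pow_le_pow_left₀ zero_le hpΩ 2)) ((hT23 x).trans hK))
    _ = (2 + 12 * K23) * (S.card : ℝ≥0∞)⁻¹ := by ring
end
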